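/- Let g ≥ 1 and let σ : ℂ^g → ℂ be infinitely complex-differentiable. For i, j, k, l ∈ {1,…,g} define the 4-index Q-function at points where σ(u) ≠ 0 by Q_{ijkl}(u) = −(1/(2σ(u)²)) · (Υ_i Υ_j Υ_k Υ_l [σ(u)σ(v)])|_{v=u}. Then for every u with σ(u) ≠ 0, Q_{ijkl}(u) = ℘_{ijkl}(u) − 2℘_{ij}(u)℘_{kl}(u) − 2℘_{ik}(u)℘_{jl}(u) − 2℘_{il}(u)℘_{jk}(u). -/

import Mathlib

noncomputable section

/-- Partial derivative in the `i`-th coordinate direction. -/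
def pd {g : ℕ} (i : Fin g) (f : (Fin g → ℂ) → ℂ) : (Fin g → ℂ) → ℂ :=
  fun u => fderiv ℂ f u (Pi.single i 1)

/-- Iterated partial derivative along a list of coordinate indices. -/
def pdIter {g : ℕ} (l : List (Fin g)) (f : (Fin g → ℂ) → ℂ) : (Fin g → ℂ) → ℂ :=
  l.foldl (fun h i => pd i h) f

/-- The 2-index Kleinian ℘-function ℘_{ij} = (σ_i σ_j − σ σ_{ij}) / σ². -/
def wp2 {g : ℕ} (σ : (Fin g → ℂ) → ℂ) (i j : Fin g) : (Fin g → ℂ) → ℂ :=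
  fun u => (pd i σ u * pd j σ u - σ u * pd j (pd i σ) u) / σ u ^ 2

/-- The m-index Kleinian ℘-function ℘_{i j k₁ ⋯ k_r}, obtained from ℘_{ij} by
successively differentiating with respect to the coordinates in `ks`. -/
def wp {g : ℕ} (σ : (Fin g → ℂ) → ℂ) (i j : Fin g) (ks : List (Fin g)) :
    (Fin g → ℂ) → ℂ :=
  ks.foldl (fun h k => pd k h) (wp2 σ i j)

/-- Partial derivative of a two-variable function in its first argument. -/
def pdU {g : ℕ} (i : Fin g) (F : (Fin g → ℂ) → (Fin g → ℂ) → ℂ) :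
    (Fin g → ℂ) → (Fin g → ℂ) → ℂ :=
  fun u v => fderiv ℂ (fun x => F x v) u (Pi.single i 1)

/-- Partial derivative of a two-variable function in its second argument. -/
def pdV {g : ℕ} (i : Fin g) (F : (Fin g → ℂ) → (Fin g → ℂ) → ℂ) :
    (Fin g → ℂ) → (Fin g → ℂ) → ℂ :=
  fun u v => fderiv ℂ (fun y => F u y) v (Pi.single i 1)

/-- Hirota's bilinear operator Υ_i = ∂/∂u_i − ∂/∂v_i. -/
def hirota {g : ℕ} (i : Fin g) (F : (Fin g → ℂ) → (Fin g → ℂ) → ℂ) :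
    (Fin g → ℂ) → (Fin g → ℂ) → ℂ :=
  fun u v => pdU i F u v - pdV i F u v

section Aux
variable {g : ℕ} {f h : (Fin g → ℂ) → ℂ} {u : Fin g → ℂ}

lemma pd_contDiff (hf : ContDiff ℂ ⊤ f) (i : Fin g) : ContDiff ℂ ⊤ (pd i f) :=
  (hf.fderiv_right le_top).clm_apply contDiff_const

lemma pd_sub (m : Fin g) (hf : DifferentiableAt ℂ f u) (hh : DifferentiableAt ℂ h u) :
    pd m (fun x => f x - h x) u = pd m f u - pd m h u := by
  simp [pd, fderiv_fun_sub hf hh]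

lemma pd_add (m : Fin g) (hf : DifferentiableAt ℂ f u) (hh : DifferentiableAt ℂ h u) :
    pd m (fun x => f x + h x) u = pd m f u + pd m h u := by
  simp [pd, fderiv_fun_add hf hh]

lemma pd_mul (m : Fin g) (hf : DifferentiableAt ℂ f u) (hh : DifferentiableAt ℂ h u) :
    pd m (fun x => f x * h x) u = pd m f u * h u + f u * pd m h u := by
  simp only [pd, fderiv_fun_mul hf hh, ContinuousLinearMap.add_apply, ContinuousLinearMap.smul_apply,
    smul_eq_mul]
  ring

lemma pd_const_mul (m : Fin g) (c : ℂ) (hf : DifferentiableAt ℂ f u) :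
    pd m (fun x => c * f x) u = c * pd m f u := by
  simp [pd, fderiv_const_mul hf]

lemma pd_inv (m : Fin g) (hh : DifferentiableAt ℂ h u) (hz : h u ≠ 0) :
    pd m (fun x => (h x)⁻¹) u = -(pd m h u / h u ^ 2) := by
  have H : HasFDerivAt (fun x => (h x)⁻¹)
      ((-ContinuousLinearMap.mulLeftRight ℂ ℂ (h u)⁻¹ (h u)⁻¹).comp (fderiv ℂ h u)) u :=
    (hasFDerivAt_inv' hz).comp u hh.hasFDerivAt
  have h1 : pd m (fun x => (h x)⁻¹) u
      = ((-ContinuousLinearMap.mulLeftRight ℂ ℂ (h u)⁻¹ (h u)⁻¹).comp (fderiv ℂ h u))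
          (Pi.single m 1) := by
    show fderiv ℂ (fun x => (h x)⁻¹) u (Pi.single m 1) = _
    rw [H.fderiv]
  rw [h1]
  simp only [ContinuousLinearMap.coe_comp', Function.comp_apply, ContinuousLinearMap.neg_apply,
    ContinuousLinearMap.mulLeftRight_apply]
  rw [show pd m h u = fderiv ℂ h u (Pi.single m 1) from rfl]
  rw [div_eq_mul_inv, pow_two, mul_inv]
  ring

lemma pd_div (m : Fin g) (hf : DifferentiableAt ℂ f u) (hh : DifferentiableAt ℂ h u)
    (hz : h u ≠ 0) :
    pd m (fun x => f x / h x) u = (pd m f u * h u - f u * pd m h u) / h u ^ 2 := by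
  have h1 : (fun x => f x / h x) = fun x => f x * (h x)⁻¹ := by
    funext x; rw [div_eq_mul_inv]
  have h2 : pd m (fun x => f x * (h x)⁻¹) u
      = pd m f u * (h u)⁻¹ + f u * pd m (fun x => (h x)⁻¹) u :=
    pd_mul m hf (hh.inv hz)
  rw [h1, h2, pd_inv m hh hz]
  field_simp
  ring

lemma pd_comm (hf : ContDiff ℂ ⊤ f) (a b : Fin g) : pd a (pd b f) = pd b (pd a f) := by
  funext u
  have hd : DifferentiableAt ℂ (fderiv ℂ f) u :=
    ((hf.fderiv_right (m := ⊤) le_top).differentiable (by simp)) u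
  have key : ∀ c d : Fin g,
      pd c (pd d f) u = fderiv ℂ (fderiv ℂ f) u (Pi.single c 1) (Pi.single d 1) := by
    intro c d
    have h3 : fderiv ℂ (fun y => (fderiv ℂ f y) (Pi.single d 1)) u
        = (fderiv ℂ f u).comp (fderiv ℂ (fun _ : Fin g → ℂ => (Pi.single d 1 : Fin g → ℂ)) u)
          + (fderiv ℂ (fderiv ℂ f) u).flip (Pi.single d 1) :=
      fderiv_clm_apply hd (differentiableAt_const _)
    show fderiv ℂ (fun y => (fderiv ℂ f y) (Pi.single d 1)) u (Pi.single c 1) = _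
    rw [h3]
    simp
  rw [key a b, key b a]
  exact (hf.contDiffAt.isSymmSndFDerivAt le_top) _ _

end Aux

section Aux2
variable {g : ℕ} {m : Fin g} {u v : Fin g → ℂ}

lemma hirota_mul_pt (A B : (Fin g → ℂ) → ℂ) (H : (Fin g → ℂ) → (Fin g → ℂ) → ℂ)
    (hH : ∀ x y, H x y = A x * B y) (hA : Differentiable ℂ A) (hB : Differentiable ℂ B) :
    hirota m H u v = pd m A u * B v - A u * pd m B v := by
  have h1 : (fun x => H x v) = fun x => A x * B v := funext fun x => hH x v
  have h2 : (fun y => H u y) = fun y => A u * B y := funext fun y => hH u y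
  show fderiv ℂ (fun x => H x v) u (Pi.single m 1)
      - fderiv ℂ (fun y => H u y) v (Pi.single m 1) = _
  rw [h1, h2, fderiv_mul_const (hA u) (B v), fderiv_const_mul (hB v) (A u)]
  simp only [pd, ContinuousLinearMap.smul_apply, smul_eq_mul]
  ring

lemma hirota_sub_pt (F G H : (Fin g → ℂ) → (Fin g → ℂ) → ℂ)
    (hH : ∀ x y, H x y = F x y - G x y)
    (hF1 : DifferentiableAt ℂ (fun x => F x v) u) (hF2 : DifferentiableAt ℂ (fun y => F u y) v)
    (hG1 : DifferentiableAt ℂ (fun x => G x v) u) (hG2 : DifferentiableAt ℂ (fun y => G u y) v) :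
    hirota m H u v = hirota m F u v - hirota m G u v := by
  have h1 : (fun x => H x v) = fun x => F x v - G x v := funext fun x => hH x v
  have h2 : (fun y => H u y) = fun y => F u y - G u y := funext fun y => hH u y
  show fderiv ℂ (fun x => H x v) u (Pi.single m 1)
      - fderiv ℂ (fun y => H u y) v (Pi.single m 1) = _
  rw [h1, h2, fderiv_fun_sub hF1 hG1, fderiv_fun_sub hF2 hG2]
  show _ = (fderiv ℂ (fun x => F x v) u (Pi.single m 1)
        - fderiv ℂ (fun y => F u y) v (Pi.single m 1))
      - (fderiv ℂ (fun x => G x v) u (Pi.single m 1)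
        - fderiv ℂ (fun y => G u y) v (Pi.single m 1))
  simp only [ContinuousLinearMap.sub_apply]
  ring

end Aux2

/-- the 4-index Q-function Q_{ijkl}, defined via Hirota's operator,
satisfies Q_{ijkl} = ℘_{ijkl} − 2℘_{ij}℘_{kl} − 2℘_{ik}℘_{jl} − 2℘_{il}℘_{jk}. -/
theorem statement2 {g : ℕ} (hg : 1 ≤ g) (σ : (Fin g → ℂ) → ℂ)
    (hσ : ContDiff ℂ ⊤ σ) (i j k l : Fin g) (u : Fin g → ℂ) (hu : σ u ≠ 0) :
    -(1 / (2 * σ u ^ 2)) *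
        hirota i (hirota j (hirota k (hirota l (fun x y => σ x * σ y)))) u u
      = wp σ i j [k, l] u - 2 * wp2 σ i j u * wp2 σ k l u
        - 2 * wp2 σ i k u * wp2 σ j l u - 2 * wp2 σ i l u * wp2 σ j k u := by
  have hσd : Differentiable ℂ σ := hσ.differentiable (by simp)
  have C1 : ∀ a : Fin g, Differentiable ℂ (pd a σ) := fun a =>
    (pd_contDiff hσ a).differentiable (by simp)
  have C2 : ∀ a b : Fin g, Differentiable ℂ (pd a (pd b σ)) := fun a b =>
    (pd_contDiff (pd_contDiff hσ b) a).differentiable (by simp)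
  have C3 : ∀ a b c : Fin g, Differentiable ℂ (pd a (pd b (pd c σ))) := fun a b c =>
    (pd_contDiff (pd_contDiff (pd_contDiff hσ c) b) a).differentiable (by simp)
  have E1 : hirota l (fun a b => σ a * σ b) = fun a b => (pd l σ a * σ b) - (σ a * pd l σ b) := by
    funext x y
    exact hirota_mul_pt _ _ _ (fun _ _ => rfl) hσd hσd
  have E2 : hirota k (hirota l (fun a b => σ a * σ b)) = fun a b => ((pd k (pd l σ) a * σ b) - (pd l σ a * pd k σ b)) - ((pd k σ a * pd l σ b) - (σ a * pd k (pd l σ) b)) := by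
    rw [E1]
    funext x y
    have s1 : hirota k (fun a b => (pd l σ a * σ b) - (σ a * pd l σ b)) x y = hirota k (fun a b => pd l σ a * σ b) x y - hirota k (fun a b => σ a * pd l σ b) x y :=
      hirota_sub_pt _ _ _ (fun _ _ => rfl) (((C1 l) x).mul_const _) ((hσd y).const_mul _) ((hσd x).mul_const _) (((C1 l) y).const_mul _)
    have s2 : hirota k (fun a b => pd l σ a * σ b) x y = pd k (pd l σ) x * σ y - pd l σ x * pd k σ y :=
      hirota_mul_pt _ _ _ (fun _ _ => rfl) (C1 l) hσd
    have s3 : hirota k (fun a b => σ a * pd l σ b) x y = pd k σ x * pd l σ y - σ x * pd k (pd l σ) y :=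
      hirota_mul_pt _ _ _ (fun _ _ => rfl) hσd (C1 l)
    rw [s1, s2, s3]
  have E3 : hirota j (hirota k (hirota l (fun a b => σ a * σ b))) = fun a b => (((pd j (pd k (pd l σ)) a * σ b) - (pd k (pd l σ) a * pd j σ b)) - ((pd j (pd l σ) a * pd k σ b) - (pd l σ a * pd j (pd k σ) b))) - (((pd j (pd k σ) a * pd l σ b) - (pd k σ a * pd j (pd l σ) b)) - ((pd j σ a * pd k (pd l σ) b) - (σ a * pd j (pd k (pd l σ)) b))) := by
    rw [E2]
    funext x y
    have s1 : hirota j (fun a b => ((pd k (pd l σ) a * σ b) - (pd l σ a * pd k σ b)) - ((pd k σ a * pd l σ b) - (σ a * pd k (pd l σ) b))) x y = hirota j (fun a b => (pd k (pd l σ) a * σ b) - (pd l σ a * pd k σ b)) x y - hirota j (fun a b => (pd k σ a * pd l σ b) - (σ a * pd k (pd l σ) b)) x y :=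
      hirota_sub_pt _ _ _ (fun _ _ => rfl) ((((C2 k l) x).mul_const _).sub (((C1 l) x).mul_const _)) (((hσd y).const_mul _).sub (((C1 k) y).const_mul _)) ((((C1 k) x).mul_const _).sub ((hσd x).mul_const _)) ((((C1 l) y).const_mul _).sub (((C2 k l) y).const_mul _))
    have s2 : hirota j (fun a b => (pd k (pd l σ) a * σ b) - (pd l σ a * pd k σ b)) x y = hirota j (fun a b => pd k (pd l σ) a * σ b) x y - hirota j (fun a b => pd l σ a * pd k σ b) x y :=
      hirota_sub_pt _ _ _ (fun _ _ => rfl) (((C2 k l) x).mul_const _) ((hσd y).const_mul _) (((C1 l) x).mul_const _) (((C1 k) y).const_mul _)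
    have s3 : hirota j (fun a b => pd k (pd l σ) a * σ b) x y = pd j (pd k (pd l σ)) x * σ y - pd k (pd l σ) x * pd j σ y :=
      hirota_mul_pt _ _ _ (fun _ _ => rfl) (C2 k l) hσd
    have s4 : hirota j (fun a b => pd l σ a * pd k σ b) x y = pd j (pd l σ) x * pd k σ y - pd l σ x * pd j (pd k σ) y :=
      hirota_mul_pt _ _ _ (fun _ _ => rfl) (C1 l) (C1 k)
    have s5 : hirota j (fun a b => (pd k σ a * pd l σ b) - (σ a * pd k (pd l σ) b)) x y = hirota j (fun a b => pd k σ a * pd l σ b) x y - hirota j (fun a b => σ a * pd k (pd l σ) b) x y :=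
      hirota_sub_pt _ _ _ (fun _ _ => rfl) (((C1 k) x).mul_const _) (((C1 l) y).const_mul _) ((hσd x).mul_const _) (((C2 k l) y).const_mul _)
    have s6 : hirota j (fun a b => pd k σ a * pd l σ b) x y = pd j (pd k σ) x * pd l σ y - pd k σ x * pd j (pd l σ) y :=
      hirota_mul_pt _ _ _ (fun _ _ => rfl) (C1 k) (C1 l)
    have s7 : hirota j (fun a b => σ a * pd k (pd l σ) b) x y = pd j σ x * pd k (pd l σ) y - σ x * pd j (pd k (pd l σ)) y :=
      hirota_mul_pt _ _ _ (fun _ _ => rfl) hσd (C2 k l)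
    rw [s1, s2, s3, s4, s5, s6, s7]
  have E4 : hirota i (hirota j (hirota k (hirota l (fun a b => σ a * σ b)))) u u = ((((pd i (pd j (pd k (pd l σ))) u * σ u) - (pd j (pd k (pd l σ)) u * pd i σ u)) - ((pd i (pd k (pd l σ)) u * pd j σ u) - (pd k (pd l σ) u * pd i (pd j σ) u))) - (((pd i (pd j (pd l σ)) u * pd k σ u) - (pd j (pd l σ) u * pd i (pd k σ) u)) - ((pd i (pd l σ) u * pd j (pd k σ) u) - (pd l σ u * pd i (pd j (pd k σ)) u)))) - ((((pd i (pd j (pd k σ)) u * pd l σ u) - (pd j (pd k σ) u * pd i (pd l σ) u)) - ((pd i (pd k σ) u * pd j (pd l σ) u) - (pd k σ u * pd i (pd j (pd l σ)) u))) - (((pd i (pd j σ) u * pd k (pd l σ) u) - (pd j σ u * pd i (pd k (pd l σ)) u)) - ((pd i σ u * pd j (pd k (pd l σ)) u) - (σ u * pd i (pd j (pd k (pd l σ))) u)))) := by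
    rw [E3]
    have s1 : hirota i (fun a b => (((pd j (pd k (pd l σ)) a * σ b) - (pd k (pd l σ) a * pd j σ b)) - ((pd j (pd l σ) a * pd k σ b) - (pd l σ a * pd j (pd k σ) b))) - (((pd j (pd k σ) a * pd l σ b) - (pd k σ a * pd j (pd l σ) b)) - ((pd j σ a * pd k (pd l σ) b) - (σ a * pd j (pd k (pd l σ)) b)))) u u = hirota i (fun a b => ((pd j (pd k (pd l σ)) a * σ b) - (pd k (pd l σ) a * pd j σ b)) - ((pd j (pd l σ) a * pd k σ b) - (pd l σ a * pd j (pd k σ) b))) u u - hirota i (fun a b => ((pd j (pd k σ) a * pd l σ b) - (pd k σ a * pd j (pd l σ) b)) - ((pd j σ a * pd k (pd l σ) b) - (σ a * pd j (pd k (pd l σ)) b))) u u :=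
      hirota_sub_pt _ _ _ (fun _ _ => rfl) (((((C3 j k l) u).mul_const _).sub (((C2 k l) u).mul_const _)).sub ((((C2 j l) u).mul_const _).sub (((C1 l) u).mul_const _))) ((((hσd u).const_mul _).sub (((C1 j) u).const_mul _)).sub ((((C1 k) u).const_mul _).sub (((C2 j k) u).const_mul _))) (((((C2 j k) u).mul_const _).sub (((C1 k) u).mul_const _)).sub ((((C1 j) u).mul_const _).sub ((hσd u).mul_const _))) (((((C1 l) u).const_mul _).sub (((C2 j l) u).const_mul _)).sub ((((C2 k l) u).const_mul _).sub (((C3 j k l) u).const_mul _)))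
    have s2 : hirota i (fun a b => ((pd j (pd k (pd l σ)) a * σ b) - (pd k (pd l σ) a * pd j σ b)) - ((pd j (pd l σ) a * pd k σ b) - (pd l σ a * pd j (pd k σ) b))) u u = hirota i (fun a b => (pd j (pd k (pd l σ)) a * σ b) - (pd k (pd l σ) a * pd j σ b)) u u - hirota i (fun a b => (pd j (pd l σ) a * pd k σ b) - (pd l σ a * pd j (pd k σ) b)) u u :=
      hirota_sub_pt _ _ _ (fun _ _ => rfl) ((((C3 j k l) u).mul_const _).sub (((C2 k l) u).mul_const _)) (((hσd u).const_mul _).sub (((C1 j) u).const_mul _)) ((((C2 j l) u).mul_const _).sub (((C1 l) u).mul_const _)) ((((C1 k) u).const_mul _).sub (((C2 j k) u).const_mul _))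
    have s3 : hirota i (fun a b => (pd j (pd k (pd l σ)) a * σ b) - (pd k (pd l σ) a * pd j σ b)) u u = hirota i (fun a b => pd j (pd k (pd l σ)) a * σ b) u u - hirota i (fun a b => pd k (pd l σ) a * pd j σ b) u u :=
      hirota_sub_pt _ _ _ (fun _ _ => rfl) (((C3 j k l) u).mul_const _) ((hσd u).const_mul _) (((C2 k l) u).mul_const _) (((C1 j) u).const_mul _)
    have s4 : hirota i (fun a b => pd j (pd k (pd l σ)) a * σ b) u u = pd i (pd j (pd k (pd l σ))) u * σ u - pd j (pd k (pd l σ)) u * pd i σ u :=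
      hirota_mul_pt _ _ _ (fun _ _ => rfl) (C3 j k l) hσd
    have s5 : hirota i (fun a b => pd k (pd l σ) a * pd j σ b) u u = pd i (pd k (pd l σ)) u * pd j σ u - pd k (pd l σ) u * pd i (pd j σ) u :=
      hirota_mul_pt _ _ _ (fun _ _ => rfl) (C2 k l) (C1 j)
    have s6 : hirota i (fun a b => (pd j (pd l σ) a * pd k σ b) - (pd l σ a * pd j (pd k σ) b)) u u = hirota i (fun a b => pd j (pd l σ) a * pd k σ b) u u - hirota i (fun a b => pd l σ a * pd j (pd k σ) b) u u :=
      hirota_sub_pt _ _ _ (fun _ _ => rfl) (((C2 j l) u).mul_const _) (((C1 k) u).const_mul _) (((C1 l) u).mul_const _) (((C2 j k) u).const_mul _)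
    have s7 : hirota i (fun a b => pd j (pd l σ) a * pd k σ b) u u = pd i (pd j (pd l σ)) u * pd k σ u - pd j (pd l σ) u * pd i (pd k σ) u :=
      hirota_mul_pt _ _ _ (fun _ _ => rfl) (C2 j l) (C1 k)
    have s8 : hirota i (fun a b => pd l σ a * pd j (pd k σ) b) u u = pd i (pd l σ) u * pd j (pd k σ) u - pd l σ u * pd i (pd j (pd k σ)) u :=
      hirota_mul_pt _ _ _ (fun _ _ => rfl) (C1 l) (C2 j k)
    have s9 : hirota i (fun a b => ((pd j (pd k σ) a * pd l σ b) - (pd k σ a * pd j (pd l σ) b)) - ((pd j σ a * pd k (pd l σ) b) - (σ a * pd j (pd k (pd l σ)) b))) u u = hirota i (fun a b => (pd j (pd k σ) a * pd l σ b) - (pd k σ a * pd j (pd l σ) b)) u u - hirota i (fun a b => (pd j σ a * pd k (pd l σ) b) - (σ a * pd j (pd k (pd l σ)) b)) u u :=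
      hirota_sub_pt _ _ _ (fun _ _ => rfl) ((((C2 j k) u).mul_const _).sub (((C1 k) u).mul_const _)) ((((C1 l) u).const_mul _).sub (((C2 j l) u).const_mul _)) ((((C1 j) u).mul_const _).sub ((hσd u).mul_const _)) ((((C2 k l) u).const_mul _).sub (((C3 j k l) u).const_mul _))
    have s10 : hirota i (fun a b => (pd j (pd k σ) a * pd l σ b) - (pd k σ a * pd j (pd l σ) b)) u u = hirota i (fun a b => pd j (pd k σ) a * pd l σ b) u u - hirota i (fun a b => pd k σ a * pd j (pd l σ) b) u u :=
      hirota_sub_pt _ _ _ (fun _ _ => rfl) (((C2 j k) u).mul_const _) (((C1 l) u).const_mul _) (((C1 k) u).mul_const _) (((C2 j l) u).const_mul _)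
    have s11 : hirota i (fun a b => pd j (pd k σ) a * pd l σ b) u u = pd i (pd j (pd k σ)) u * pd l σ u - pd j (pd k σ) u * pd i (pd l σ) u :=
      hirota_mul_pt _ _ _ (fun _ _ => rfl) (C2 j k) (C1 l)
    have s12 : hirota i (fun a b => pd k σ a * pd j (pd l σ) b) u u = pd i (pd k σ) u * pd j (pd l σ) u - pd k σ u * pd i (pd j (pd l σ)) u :=
      hirota_mul_pt _ _ _ (fun _ _ => rfl) (C1 k) (C2 j l)
    have s13 : hirota i (fun a b => (pd j σ a * pd k (pd l σ) b) - (σ a * pd j (pd k (pd l σ)) b)) u u = hirota i (fun a b => pd j σ a * pd k (pd l σ) b) u u - hirota i (fun a b => σ a * pd j (pd k (pd l σ)) b) u u :=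
      hirota_sub_pt _ _ _ (fun _ _ => rfl) (((C1 j) u).mul_const _) (((C2 k l) u).const_mul _) ((hσd u).mul_const _) (((C3 j k l) u).const_mul _)
    have s14 : hirota i (fun a b => pd j σ a * pd k (pd l σ) b) u u = pd i (pd j σ) u * pd k (pd l σ) u - pd j σ u * pd i (pd k (pd l σ)) u :=
      hirota_mul_pt _ _ _ (fun _ _ => rfl) (C1 j) (C2 k l)
    have s15 : hirota i (fun a b => σ a * pd j (pd k (pd l σ)) b) u u = pd i σ u * pd j (pd k (pd l σ)) u - σ u * pd i (pd j (pd k (pd l σ))) u :=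
      hirota_mul_pt _ _ _ (fun _ _ => rfl) hσd (C3 j k l)
    rw [s1, s2, s3, s4, s5, s6, s7, s8, s9, s10, s11, s12, s13, s14, s15]
  -- RHS computation
  have hA : ∀ w, σ w ≠ 0 → pd k (wp2 σ i j) w = (((pd k (pd i σ) w * pd j σ w + pd i σ w * pd k (pd j σ) w) - (pd k σ w * pd j (pd i σ) w + σ w * pd k (pd j (pd i σ)) w)) * σ w ^ 2 - (pd i σ w * pd j σ w - σ w * pd j (pd i σ) w) * (2 * σ w * pd k σ w)) / (σ w ^ 2) ^ 2 := by
    intro w hw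
    have hNd : DifferentiableAt ℂ (fun x => pd i σ x * pd j σ x - σ x * pd j (pd i σ) x) w :=
      ((C1 i w).mul (C1 j w)).sub ((hσd w).mul (C2 j i w))
    have hDd : DifferentiableAt ℂ (fun x => σ x ^ 2) w := (hσd w).pow 2
    have h1 : pd k (wp2 σ i j) w
        = (pd k (fun x => pd i σ x * pd j σ x - σ x * pd j (pd i σ) x) w * σ w ^ 2
          - (pd i σ w * pd j σ w - σ w * pd j (pd i σ) w) * pd k (fun x => σ x ^ 2) w)
          / (σ w ^ 2) ^ 2 := pd_div k hNd hDd (pow_ne_zero 2 hw)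
    have a1 : pd k (fun x => pd i σ x * pd j σ x) w
        = pd k (pd i σ) w * pd j σ w + pd i σ w * pd k (pd j σ) w := pd_mul k (C1 i w) (C1 j w)
    have a2 : pd k (fun x => σ x * pd j (pd i σ) x) w
        = pd k σ w * pd j (pd i σ) w + σ w * pd k (pd j (pd i σ)) w :=
      pd_mul k (hσd w) (C2 j i w)
    have h2 : pd k (fun x => pd i σ x * pd j σ x - σ x * pd j (pd i σ) x) w
        = pd k (fun x => pd i σ x * pd j σ x) w - pd k (fun x => σ x * pd j (pd i σ) x) w :=
      pd_sub k ((C1 i w).mul (C1 j w)) ((hσd w).mul (C2 j i w))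
    have h3 : pd k (fun x => σ x ^ 2) w = 2 * σ w * pd k σ w := by
      have hfun : (fun x : Fin g → ℂ => σ x ^ 2) = fun x => σ x * σ x := by funext x; ring
      have a3 : pd k (fun x => σ x * σ x) w = pd k σ w * σ w + σ w * pd k σ w :=
        pd_mul k (hσd w) (hσd w)
      rw [hfun, a3]; ring
    rw [h1, h2, a1, a2, h3]
  have hopen : IsOpen {w : Fin g → ℂ | σ w ≠ 0} := isOpen_ne.preimage hσ.continuous
  have hev : pd k (wp2 σ i j) =ᶠ[nhds u] fun w => (((pd k (pd i σ) w * pd j σ w + pd i σ w * pd k (pd j σ) w) - (pd k σ w * pd j (pd i σ) w + σ w * pd k (pd j (pd i σ)) w)) * σ w ^ 2 - (pd i σ w * pd j σ w - σ w * pd j (pd i σ) w) * (2 * σ w * pd k σ w)) / (σ w ^ 2) ^ 2 := by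
    filter_upwards [hopen.mem_nhds hu] with w hw using hA w hw
  have hB : pd l (pd k (wp2 σ i j)) u = pd l (fun w => (((pd k (pd i σ) w * pd j σ w + pd i σ w * pd k (pd j σ) w) - (pd k σ w * pd j (pd i σ) w + σ w * pd k (pd j (pd i σ)) w)) * σ w ^ 2 - (pd i σ w * pd j σ w - σ w * pd j (pd i σ) w) * (2 * σ w * pd k σ w)) / (σ w ^ 2) ^ 2) u := by
    show fderiv ℂ (pd k (wp2 σ i j)) u (Pi.single l 1) = _
    rw [hev.fderiv_eq]
    rfl
  -- differentiability facts at u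
  have hPd : DifferentiableAt ℂ (fun w => (pd k (pd i σ) w * pd j σ w + pd i σ w * pd k (pd j σ) w) - (pd k σ w * pd j (pd i σ) w + σ w * pd k (pd j (pd i σ)) w)) u :=
    (((C2 k i u).mul (C1 j u)).add ((C1 i u).mul (C2 k j u))).sub
      (((C1 k u).mul (C2 j i u)).add ((hσd u).mul (C3 k j i u)))
  have hQd : DifferentiableAt ℂ (fun w => σ w ^ 2) u := (hσd u).pow 2
  have hRd : DifferentiableAt ℂ (fun w => pd i σ w * pd j σ w - σ w * pd j (pd i σ) w) u :=
    ((C1 i u).mul (C1 j u)).sub ((hσd u).mul (C2 j i u))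
  have hSd : DifferentiableAt ℂ (fun w => 2 * σ w * pd k σ w) u := ((hσd u).const_mul 2).mul (C1 k u)
  have hNUMd : DifferentiableAt ℂ (fun w => ((pd k (pd i σ) w * pd j σ w + pd i σ w * pd k (pd j σ) w) - (pd k σ w * pd j (pd i σ) w + σ w * pd k (pd j (pd i σ)) w)) * σ w ^ 2 - (pd i σ w * pd j σ w - σ w * pd j (pd i σ) w) * (2 * σ w * pd k σ w)) u := (hPd.mul hQd).sub (hRd.mul hSd)
  have c1 : pd l (fun w => (((pd k (pd i σ) w * pd j σ w + pd i σ w * pd k (pd j σ) w) - (pd k σ w * pd j (pd i σ) w + σ w * pd k (pd j (pd i σ)) w)) * σ w ^ 2 - (pd i σ w * pd j σ w - σ w * pd j (pd i σ) w) * (2 * σ w * pd k σ w)) / (σ w ^ 2) ^ 2) u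
      = (pd l (fun w => ((pd k (pd i σ) w * pd j σ w + pd i σ w * pd k (pd j σ) w) - (pd k σ w * pd j (pd i σ) w + σ w * pd k (pd j (pd i σ)) w)) * σ w ^ 2 - (pd i σ w * pd j σ w - σ w * pd j (pd i σ) w) * (2 * σ w * pd k σ w)) u * (σ u ^ 2) ^ 2
        - (((pd k (pd i σ) u * pd j σ u + pd i σ u * pd k (pd j σ) u) - (pd k σ u * pd j (pd i σ) u + σ u * pd k (pd j (pd i σ)) u)) * σ u ^ 2 - (pd i σ u * pd j σ u - σ u * pd j (pd i σ) u) * (2 * σ u * pd k σ u)) * pd l (fun w => (σ w ^ 2) ^ 2) u) / ((σ u ^ 2) ^ 2) ^ 2 :=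
    pd_div l hNUMd (hQd.pow 2) (pow_ne_zero 2 (pow_ne_zero 2 hu))
  have c2 : pd l (fun w => ((pd k (pd i σ) w * pd j σ w + pd i σ w * pd k (pd j σ) w) - (pd k σ w * pd j (pd i σ) w + σ w * pd k (pd j (pd i σ)) w)) * σ w ^ 2 - (pd i σ w * pd j σ w - σ w * pd j (pd i σ) w) * (2 * σ w * pd k σ w)) u
      = pd l (fun w => ((pd k (pd i σ) w * pd j σ w + pd i σ w * pd k (pd j σ) w) - (pd k σ w * pd j (pd i σ) w + σ w * pd k (pd j (pd i σ)) w)) * σ w ^ 2) u - pd l (fun w => (pd i σ w * pd j σ w - σ w * pd j (pd i σ) w) * (2 * σ w * pd k σ w)) u :=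
    pd_sub l (hPd.mul hQd) (hRd.mul hSd)
  have c2a : pd l (fun w => ((pd k (pd i σ) w * pd j σ w + pd i σ w * pd k (pd j σ) w) - (pd k σ w * pd j (pd i σ) w + σ w * pd k (pd j (pd i σ)) w)) * σ w ^ 2) u
      = pd l (fun w => (pd k (pd i σ) w * pd j σ w + pd i σ w * pd k (pd j σ) w) - (pd k σ w * pd j (pd i σ) w + σ w * pd k (pd j (pd i σ)) w)) u * σ u ^ 2 + ((pd k (pd i σ) u * pd j σ u + pd i σ u * pd k (pd j σ) u) - (pd k σ u * pd j (pd i σ) u + σ u * pd k (pd j (pd i σ)) u)) * pd l (fun w => σ w ^ 2) u :=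
    pd_mul l hPd hQd
  have c2b : pd l (fun w => (pd i σ w * pd j σ w - σ w * pd j (pd i σ) w) * (2 * σ w * pd k σ w)) u
      = pd l (fun w => pd i σ w * pd j σ w - σ w * pd j (pd i σ) w) u * (2 * σ u * pd k σ u) + (pd i σ u * pd j σ u - σ u * pd j (pd i σ) u) * pd l (fun w => 2 * σ w * pd k σ w) u :=
    pd_mul l hRd hSd
  have c3 : pd l (fun w => (pd k (pd i σ) w * pd j σ w + pd i σ w * pd k (pd j σ) w) - (pd k σ w * pd j (pd i σ) w + σ w * pd k (pd j (pd i σ)) w)) u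
      = ((pd l (pd k (pd i σ)) u * pd j σ u + pd k (pd i σ) u * pd l (pd j σ) u)
          + (pd l (pd i σ) u * pd k (pd j σ) u + pd i σ u * pd l (pd k (pd j σ)) u))
        - ((pd l (pd k σ) u * pd j (pd i σ) u + pd k σ u * pd l (pd j (pd i σ)) u)
          + (pd l σ u * pd k (pd j (pd i σ)) u + σ u * pd l (pd k (pd j (pd i σ))) u)) := by
    have b0 : pd l (fun w => (pd k (pd i σ) w * pd j σ w + pd i σ w * pd k (pd j σ) w) - (pd k σ w * pd j (pd i σ) w + σ w * pd k (pd j (pd i σ)) w)) u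
        = pd l (fun w => pd k (pd i σ) w * pd j σ w + pd i σ w * pd k (pd j σ) w) u
          - pd l (fun w => pd k σ w * pd j (pd i σ) w + σ w * pd k (pd j (pd i σ)) w) u :=
      pd_sub l (((C2 k i u).mul (C1 j u)).add ((C1 i u).mul (C2 k j u)))
        (((C1 k u).mul (C2 j i u)).add ((hσd u).mul (C3 k j i u)))
    have b1 : pd l (fun w => pd k (pd i σ) w * pd j σ w + pd i σ w * pd k (pd j σ) w) u
        = pd l (fun w => pd k (pd i σ) w * pd j σ w) u
          + pd l (fun w => pd i σ w * pd k (pd j σ) w) u :=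
      pd_add l ((C2 k i u).mul (C1 j u)) ((C1 i u).mul (C2 k j u))
    have b2 : pd l (fun w => pd k σ w * pd j (pd i σ) w + σ w * pd k (pd j (pd i σ)) w) u
        = pd l (fun w => pd k σ w * pd j (pd i σ) w) u
          + pd l (fun w => σ w * pd k (pd j (pd i σ)) w) u :=
      pd_add l ((C1 k u).mul (C2 j i u)) ((hσd u).mul (C3 k j i u))
    have b3 : pd l (fun w => pd k (pd i σ) w * pd j σ w) u
        = pd l (pd k (pd i σ)) u * pd j σ u + pd k (pd i σ) u * pd l (pd j σ) u :=
      pd_mul l (C2 k i u) (C1 j u)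
    have b4 : pd l (fun w => pd i σ w * pd k (pd j σ) w) u
        = pd l (pd i σ) u * pd k (pd j σ) u + pd i σ u * pd l (pd k (pd j σ)) u :=
      pd_mul l (C1 i u) (C2 k j u)
    have b5 : pd l (fun w => pd k σ w * pd j (pd i σ) w) u
        = pd l (pd k σ) u * pd j (pd i σ) u + pd k σ u * pd l (pd j (pd i σ)) u :=
      pd_mul l (C1 k u) (C2 j i u)
    have b6 : pd l (fun w => σ w * pd k (pd j (pd i σ)) w) u
        = pd l σ u * pd k (pd j (pd i σ)) u + σ u * pd l (pd k (pd j (pd i σ))) u :=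
      pd_mul l (hσd u) (C3 k j i u)
    rw [b0, b1, b2, b3, b4, b5, b6]
  have c4 : pd l (fun w => σ w ^ 2) u = 2 * σ u * pd l σ u := by
    have hfun : (fun w : Fin g → ℂ => σ w ^ 2) = fun w => σ w * σ w := by funext w; ring
    have b1 : pd l (fun w => σ w * σ w) u = pd l σ u * σ u + σ u * pd l σ u :=
      pd_mul l (hσd u) (hσd u)
    rw [hfun, b1]; ring
  have c5 : pd l (fun w => pd i σ w * pd j σ w - σ w * pd j (pd i σ) w) u
      = (pd l (pd i σ) u * pd j σ u + pd i σ u * pd l (pd j σ) u)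
        - (pd l σ u * pd j (pd i σ) u + σ u * pd l (pd j (pd i σ)) u) := by
    have b0 : pd l (fun w => pd i σ w * pd j σ w - σ w * pd j (pd i σ) w) u
        = pd l (fun w => pd i σ w * pd j σ w) u - pd l (fun w => σ w * pd j (pd i σ) w) u :=
      pd_sub l ((C1 i u).mul (C1 j u)) ((hσd u).mul (C2 j i u))
    have b1 : pd l (fun w => pd i σ w * pd j σ w) u
        = pd l (pd i σ) u * pd j σ u + pd i σ u * pd l (pd j σ) u := pd_mul l (C1 i u) (C1 j u)
    have b2 : pd l (fun w => σ w * pd j (pd i σ) w) u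
        = pd l σ u * pd j (pd i σ) u + σ u * pd l (pd j (pd i σ)) u := pd_mul l (hσd u) (C2 j i u)
    rw [b0, b1, b2]
  have c6 : pd l (fun w => 2 * σ w * pd k σ w) u = 2 * pd l σ u * pd k σ u + 2 * σ u * pd l (pd k σ) u := by
    have b1 : pd l (fun w => 2 * σ w * pd k σ w) u
        = pd l (fun w => 2 * σ w) u * pd k σ u + 2 * σ u * pd l (pd k σ) u :=
      pd_mul l ((hσd u).const_mul 2) (C1 k u)
    have b2 : pd l (fun w => 2 * σ w) u = 2 * pd l σ u := pd_const_mul l 2 (hσd u)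
    rw [b1, b2]
  have c7 : pd l (fun w => (σ w ^ 2) ^ 2) u = 4 * σ u ^ 3 * pd l σ u := by
    have hfun : (fun w : Fin g → ℂ => (σ w ^ 2) ^ 2) = fun w => σ w * σ w * (σ w * σ w) := by
      funext w; ring
    have b1 : pd l (fun w => σ w * σ w * (σ w * σ w)) u
        = pd l (fun w => σ w * σ w) u * (σ u * σ u) + σ u * σ u * pd l (fun w => σ w * σ w) u :=
      pd_mul l ((hσd u).mul (hσd u)) ((hσd u).mul (hσd u))
    have b2 : pd l (fun w => σ w * σ w) u = pd l σ u * σ u + σ u * pd l σ u :=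
      pd_mul l (hσd u) (hσd u)
    rw [hfun, b1, b2]; ring
  -- Schwarz normalization
  have cij : pd i (pd j σ) = pd j (pd i σ) := pd_comm hσ i j
  have cik : pd i (pd k σ) = pd k (pd i σ) := pd_comm hσ i k
  have cil : pd i (pd l σ) = pd l (pd i σ) := pd_comm hσ i l
  have cjk : pd j (pd k σ) = pd k (pd j σ) := pd_comm hσ j k
  have cjl : pd j (pd l σ) = pd l (pd j σ) := pd_comm hσ j l
  have ckl : pd k (pd l σ) = pd l (pd k σ) := pd_comm hσ k l
  have n3a : pd j (pd k (pd l σ)) = pd l (pd k (pd j σ)) := by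
    rw [pd_comm hσ k l, pd_comm (pd_contDiff hσ k) j l, pd_comm hσ j k]
  have n3b : pd i (pd k (pd l σ)) = pd l (pd k (pd i σ)) := by
    rw [pd_comm hσ k l, pd_comm (pd_contDiff hσ k) i l, pd_comm hσ i k]
  have n3c : pd i (pd j (pd l σ)) = pd l (pd j (pd i σ)) := by
    rw [pd_comm hσ j l, pd_comm (pd_contDiff hσ j) i l, pd_comm hσ i j]
  have n3d : pd i (pd j (pd k σ)) = pd k (pd j (pd i σ)) := by
    rw [pd_comm hσ j k, pd_comm (pd_contDiff hσ j) i k, pd_comm hσ i j]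
  have n4 : pd i (pd j (pd k (pd l σ))) = pd l (pd k (pd j (pd i σ))) := by
    rw [n3a, pd_comm (pd_contDiff (pd_contDiff hσ j) k) i l,
      pd_comm (pd_contDiff hσ j) i k, pd_comm hσ i j]
  have wij : wp2 σ i j u = (pd i σ u * pd j σ u - σ u * pd j (pd i σ) u) / σ u ^ 2 := rfl
  have wkl : wp2 σ k l u = (pd k σ u * pd l σ u - σ u * pd l (pd k σ) u) / σ u ^ 2 := rfl
  have wik : wp2 σ i k u = (pd i σ u * pd k σ u - σ u * pd k (pd i σ) u) / σ u ^ 2 := rfl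
  have wjl : wp2 σ j l u = (pd j σ u * pd l σ u - σ u * pd l (pd j σ) u) / σ u ^ 2 := rfl
  have wil : wp2 σ i l u = (pd i σ u * pd l σ u - σ u * pd l (pd i σ) u) / σ u ^ 2 := rfl
  have wjk : wp2 σ j k u = (pd j σ u * pd k σ u - σ u * pd k (pd j σ) u) / σ u ^ 2 := rfl
  have hwp : wp σ i j [k, l] u = pd l (pd k (wp2 σ i j)) u := rfl
  rw [E4, hwp, hB, c1, c2, c2a, c2b, c3, c4, c5, c6, c7, wij, wkl, wik, wjl, wil, wjk,
    n4, n3a, n3b, n3c, n3d, ckl, cjl, cjk, cil, cik, cij]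
  have h2u : σ u ^ 2 ≠ 0 := pow_ne_zero 2 hu
  field_simp [hu]
  have hone : σ u ^ 20 * (σ u)⁻¹ ^ 20 = 1 := by
    rw [← mul_pow, mul_inv_cancel₀ hu, one_pow]
  ring
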